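/- The vector fields X₁ = q∂_q + q̄∂_{q̄} + (q+q̄+ψ)∂_ψ, X₂ = (q−q̄)∂_ψ, X_{a} = a(z)∂_z − a'(z)q∂_ψ, X_{c} = c(z)∂_q, and X_{d} = d(z)∂_ψ (with a, c, d holomorphic), together with their complex conjugates, are point symmetry generators of the equation ψ_{q q̄}ψ_{z z̄} − ψ_{q z̄}ψ_{q̄ z} = e^{ψ_q + ψ_{q̄}}(ψ_{q q̄}² − ψ_{qq}ψ_{q̄ q̄}): i.e., for each generator X, the corresponding Lie symmetry characteristic φ satisfies the linearization of the equation on its solution manifold. -/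

import Mathlib

noncomputable section

/-- Functions of the four independent complex variables (z₁, z̄₁, z₂, z̄₂). -/
abbrev F4 := ℂ → ℂ → ℂ → ℂ → ℂ

/-- Partial derivative in the 1st slot (z₁, resp. q). -/
def D1 (f : F4) : F4 := fun a b c d => deriv (fun t => f t b c d) a
/-- Partial derivative in the 2nd slot (z̄₁, resp. q̄). -/
def D2 (f : F4) : F4 := fun a b c d => deriv (fun t => f a t c d) b
/-- Partial derivative in the 3rd slot (z₂, resp. z). -/
def D3 (f : F4) : F4 := fun a b c d => deriv (fun t => f a b t d) c
/-- Partial derivative in the 4th slot (z̄₂, resp. z̄). -/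
def D4 (f : F4) : F4 := fun a b c d => deriv (fun t => f a b c t) d

/-- Smoothness of a function of the four complex variables. -/
def Sm (f : F4) : Prop :=
  ContDiff ℂ ⊤ (fun p : ℂ × ℂ × ℂ × ℂ => f p.1 p.2.1 p.2.2.1 p.2.2.2)

/-- The Legendre-transformed HCMA operator
E(ψ) = ψ_{qq̄}ψ_{zz̄} − ψ_{qz̄}ψ_{q̄z} − e^{ψ_q+ψ_q̄}(ψ_{qq̄}² − ψ_{qq}ψ_{q̄q̄}).
Slots: 1 = q, 2 = q̄, 3 = z, 4 = z̄. -/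
def Epde (ψ : F4) : F4 := fun a b c d =>
  D2 (D1 ψ) a b c d * D4 (D3 ψ) a b c d - D4 (D1 ψ) a b c d * D3 (D2 ψ) a b c d
  - Complex.exp (D1 ψ a b c d + D2 ψ a b c d) *
      ((D2 (D1 ψ) a b c d) ^ 2 - D1 (D1 ψ) a b c d * D2 (D2 ψ) a b c d)

/-- Linearization (Fréchet derivative) of `Epde` at ψ, applied to φ. -/
def LinE (ψ φ : F4) : F4 := fun a b c d =>
  D2 (D1 φ) a b c d * D4 (D3 ψ) a b c d + D2 (D1 ψ) a b c d * D4 (D3 φ) a b c d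
  - D4 (D1 φ) a b c d * D3 (D2 ψ) a b c d - D4 (D1 ψ) a b c d * D3 (D2 φ) a b c d
  - Complex.exp (D1 ψ a b c d + D2 ψ a b c d) *
      ( (D1 φ a b c d + D2 φ a b c d) *
          ((D2 (D1 ψ) a b c d) ^ 2 - D1 (D1 ψ) a b c d * D2 (D2 ψ) a b c d)
        + 2 * D2 (D1 ψ) a b c d * D2 (D1 φ) a b c d
        - D1 (D1 φ) a b c d * D2 (D2 ψ) a b c d
        - D1 (D1 ψ) a b c d * D2 (D2 φ) a b c d )

namespace Infra

abbrev P4 := ℂ × ℂ × ℂ × ℂ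
def unc (f : F4) : P4 → ℂ := fun p => f p.1 p.2.1 p.2.2.1 p.2.2.2

def v1 : P4 := (1, 0, 0, 0)
def v2 : P4 := (0, 1, 0, 0)
def v3 : P4 := (0, 0, 1, 0)
def v4 : P4 := (0, 0, 0, 1)

variable {f : F4}

lemma emb1 (a b c d : ℂ) : HasDerivAt (fun t : ℂ => ((t, b, c, d) : P4)) v1 a :=
  (hasDerivAt_id a).prodMk (hasDerivAt_const a ((b, c, d) : ℂ × ℂ × ℂ))

lemma emb2 (a b c d : ℂ) : HasDerivAt (fun t : ℂ => ((a, t, c, d) : P4)) v2 b :=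
  (hasDerivAt_const b a).prodMk ((hasDerivAt_id b).prodMk (hasDerivAt_const b ((c,d) : ℂ × ℂ)))

lemma emb3 (a b c d : ℂ) : HasDerivAt (fun t : ℂ => ((a, b, t, d) : P4)) v3 c :=
  (hasDerivAt_const c a).prodMk ((hasDerivAt_const c b).prodMk ((hasDerivAt_id c).prodMk (hasDerivAt_const c d)))

lemma emb4 (a b c d : ℂ) : HasDerivAt (fun t : ℂ => ((a, b, c, t) : P4)) v4 d :=
  (hasDerivAt_const d a).prodMk ((hasDerivAt_const d b).prodMk ((hasDerivAt_const d c).prodMk (hasDerivAt_id d)))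

lemma D1_eq (hf : Sm f) (a b c d : ℂ) :
    D1 f a b c d = fderiv ℂ (unc f) (a, b, c, d) v1 :=
  by have h := ((((show Differentiable ℂ (unc f) from hf.differentiable (by simp)) ((a,b,c,d) : P4)).hasFDerivAt).comp_hasDerivAt a (emb1 a b c d)).deriv
     exact h

lemma D2_eq (hf : Sm f) (a b c d : ℂ) :
    D2 f a b c d = fderiv ℂ (unc f) (a, b, c, d) v2 :=
  by have h := ((((show Differentiable ℂ (unc f) from hf.differentiable (by simp)) ((a,b,c,d) : P4)).hasFDerivAt).comp_hasDerivAt b (emb2 a b c d)).deriv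
     exact h

lemma D3_eq (hf : Sm f) (a b c d : ℂ) :
    D3 f a b c d = fderiv ℂ (unc f) (a, b, c, d) v3 :=
  by have h := ((((show Differentiable ℂ (unc f) from hf.differentiable (by simp)) ((a,b,c,d) : P4)).hasFDerivAt).comp_hasDerivAt c (emb3 a b c d)).deriv
     exact h

lemma D4_eq (hf : Sm f) (a b c d : ℂ) :
    D4 f a b c d = fderiv ℂ (unc f) (a, b, c, d) v4 :=
  by have h := ((((show Differentiable ℂ (unc f) from hf.differentiable (by simp)) ((a,b,c,d) : P4)).hasFDerivAt).comp_hasDerivAt d (emb4 a b c d)).deriv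
     exact h

lemma Sm_of_fderiv_apply (hf : Sm f) (v : P4) :
    ContDiff ℂ ⊤ (fun p : P4 => fderiv ℂ (unc f) p v) :=
  (hf.fderiv_right (le_top)).clm_apply contDiff_const

lemma SmD1 (hf : Sm f) : Sm (D1 f) := by
  have h : (fun p : P4 => D1 f p.1 p.2.1 p.2.2.1 p.2.2.2)
      = fun p : P4 => fderiv ℂ (unc f) p v1 := funext fun p => D1_eq hf p.1 p.2.1 p.2.2.1 p.2.2.2
  rw [Sm, h]; exact Sm_of_fderiv_apply hf v1

lemma SmD2 (hf : Sm f) : Sm (D2 f) := by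
  have h : (fun p : P4 => D2 f p.1 p.2.1 p.2.2.1 p.2.2.2)
      = fun p : P4 => fderiv ℂ (unc f) p v2 := funext fun p => D2_eq hf p.1 p.2.1 p.2.2.1 p.2.2.2
  rw [Sm, h]; exact Sm_of_fderiv_apply hf v2

lemma SmD3 (hf : Sm f) : Sm (D3 f) := by
  have h : (fun p : P4 => D3 f p.1 p.2.1 p.2.2.1 p.2.2.2)
      = fun p : P4 => fderiv ℂ (unc f) p v3 := funext fun p => D3_eq hf p.1 p.2.1 p.2.2.1 p.2.2.2
  rw [Sm, h]; exact Sm_of_fderiv_apply hf v3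

lemma SmD4 (hf : Sm f) : Sm (D4 f) := by
  have h : (fun p : P4 => D4 f p.1 p.2.1 p.2.2.1 p.2.2.2)
      = fun p : P4 => fderiv ℂ (unc f) p v4 := funext fun p => D4_eq hf p.1 p.2.1 p.2.2.1 p.2.2.2
  rw [Sm, h]; exact Sm_of_fderiv_apply hf v4

lemma snd_rep (hf : Sm f) (w : P4) (p : P4) (v : P4) :
    fderiv ℂ (fun r : P4 => fderiv ℂ (unc f) r w) p v
      = fderiv ℂ (fderiv ℂ (unc f)) p v w := by
  have h1 : DifferentiableAt ℂ (fderiv ℂ (unc f)) p :=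
    ((hf.fderiv_right (m := ⊤) (le_top)).differentiable (by simp)) p
  rw [fderiv_clm_apply h1 (differentiableAt_const w)]
  simp

lemma symm2 (hf : Sm f) (p : P4) (v w : P4) :
    fderiv ℂ (fderiv ℂ (unc f)) p v w = fderiv ℂ (fderiv ℂ (unc f)) p w v :=
  ((hf.contDiffAt (x := p)).isSymmSndFDerivAt (by norm_num)) v w

lemma comm_gen {Di Dj : F4 → F4} {vi vj : P4} (hf : Sm f)
    (hSi : Sm (Di f)) (hSj : Sm (Dj f))
    (hri : ∀ (g : F4), Sm g → ∀ a b c d : ℂ, Di g a b c d = fderiv ℂ (unc g) (a,b,c,d) vi)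
    (hrj : ∀ (g : F4), Sm g → ∀ a b c d : ℂ, Dj g a b c d = fderiv ℂ (unc g) (a,b,c,d) vj) :
    Di (Dj f) = Dj (Di f) := by
  funext a b c d
  rw [hri (Dj f) hSj a b c d, hrj (Di f) hSi a b c d]
  have h1 : unc (Dj f) = fun r : P4 => fderiv ℂ (unc f) r vj :=
    funext fun p => hrj f hf p.1 p.2.1 p.2.2.1 p.2.2.2
  have h2 : unc (Di f) = fun r : P4 => fderiv ℂ (unc f) r vi :=
    funext fun p => hri f hf p.1 p.2.1 p.2.2.1 p.2.2.2
  rw [h1, h2, snd_rep hf, snd_rep hf, symm2 hf]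

lemma comm12 (hf : Sm f) : D1 (D2 f) = D2 (D1 f) :=
  comm_gen hf (SmD1 hf) (SmD2 hf) (fun _ hg => D1_eq hg) (fun _ hg => D2_eq hg)
lemma comm13 (hf : Sm f) : D1 (D3 f) = D3 (D1 f) :=
  comm_gen hf (SmD1 hf) (SmD3 hf) (fun _ hg => D1_eq hg) (fun _ hg => D3_eq hg)
lemma comm14 (hf : Sm f) : D1 (D4 f) = D4 (D1 f) :=
  comm_gen hf (SmD1 hf) (SmD4 hf) (fun _ hg => D1_eq hg) (fun _ hg => D4_eq hg)
lemma comm23 (hf : Sm f) : D2 (D3 f) = D3 (D2 f) :=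
  comm_gen hf (SmD2 hf) (SmD3 hf) (fun _ hg => D2_eq hg) (fun _ hg => D3_eq hg)
lemma comm24 (hf : Sm f) : D2 (D4 f) = D4 (D2 f) :=
  comm_gen hf (SmD2 hf) (SmD4 hf) (fun _ hg => D2_eq hg) (fun _ hg => D4_eq hg)
lemma comm34 (hf : Sm f) : D3 (D4 f) = D4 (D3 f) :=
  comm_gen hf (SmD3 hf) (SmD4 hf) (fun _ hg => D3_eq hg) (fun _ hg => D4_eq hg)

lemma hd1 (hf : Sm f) (a b c d : ℂ) : HasDerivAt (fun t => f t b c d) (D1 f a b c d) a := by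
  have h : DifferentiableAt ℂ (fun t => f t b c d) a :=
    by have h := (((show Differentiable ℂ (unc f) from hf.differentiable (by simp)) ((a,b,c,d):P4)).hasFDerivAt.comp_hasDerivAt a (emb1 a b c d)).differentiableAt
       exact h
  exact h.hasDerivAt

lemma hd2 (hf : Sm f) (a b c d : ℂ) : HasDerivAt (fun t => f a t c d) (D2 f a b c d) b := by
  have h : DifferentiableAt ℂ (fun t => f a t c d) b :=
    by have h := (((show Differentiable ℂ (unc f) from hf.differentiable (by simp)) ((a,b,c,d):P4)).hasFDerivAt.comp_hasDerivAt b (emb2 a b c d)).differentiableAt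
       exact h
  exact h.hasDerivAt

lemma hd3 (hf : Sm f) (a b c d : ℂ) : HasDerivAt (fun t => f a b t d) (D3 f a b c d) c := by
  have h : DifferentiableAt ℂ (fun t => f a b t d) c :=
    by have h := (((show Differentiable ℂ (unc f) from hf.differentiable (by simp)) ((a,b,c,d):P4)).hasFDerivAt.comp_hasDerivAt c (emb3 a b c d)).differentiableAt
       exact h
  exact h.hasDerivAt

lemma hd4 (hf : Sm f) (a b c d : ℂ) : HasDerivAt (fun t => f a b c t) (D4 f a b c d) d := by
  have h : DifferentiableAt ℂ (fun t => f a b c t) d :=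
    by have h := (((show Differentiable ℂ (unc f) from hf.differentiable (by simp)) ((a,b,c,d):P4)).hasFDerivAt.comp_hasDerivAt d (emb4 a b c d)).differentiableAt
       exact h
  exact h.hasDerivAt

end Infra


open Infra


lemma E1lem (ψ : F4) (hψ : Sm ψ) (hsol : ∀ a b c d : ℂ, Epde ψ a b c d = 0)
    (a b c d : ℂ) :
    D2 (D1 (D1 ψ)) a b c d * D4 (D3 ψ) a b c d + D2 (D1 ψ) a b c d * D4 (D3 (D1 ψ)) a b c d - D4 (D1 (D1 ψ)) a b c d * D3 (D2 ψ) a b c d - D4 (D1 ψ) a b c d * D3 (D2 (D1 ψ)) a b c d - Complex.exp (D1 ψ a b c d + D2 ψ a b c d) * ((D1 (D1 ψ) a b c d + D2 (D1 ψ) a b c d) * ((D2 (D1 ψ) a b c d) ^ 2 - D1 (D1 ψ) a b c d * D2 (D2 ψ) a b c d) + 2 * D2 (D1 ψ) a b c d * D2 (D1 (D1 ψ)) a b c d - D1 (D1 (D1 ψ)) a b c d * D2 (D2 ψ) a b c d - D1 (D1 ψ) a b c d * D2 (D2 (D1 ψ)) a b c d) = 0 := by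
  have hs0 := hψ
  have s1 := SmD1 hψ; have s2 := SmD2 hψ; have s3 := SmD3 hψ; have s4 := SmD4 hψ
  have s11 := SmD1 s1; have s21 := SmD2 s1; have s22 := SmD2 s2
  have s43 := SmD4 s3; have s41 := SmD4 s1; have s32 := SmD3 s2
  have H := (((hd1 s21 a b c d).mul (hd1 s43 a b c d)).sub
      ((hd1 s41 a b c d).mul (hd1 s32 a b c d))).sub
    ((((hd1 s1 a b c d).add (hd1 s2 a b c d)).cexp).mul
      (((hd1 s21 a b c d).pow 2).sub ((hd1 s11 a b c d).mul (hd1 s22 a b c d))))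
  have hzero : deriv (fun t => Epde ψ t b c d) a = 0 := by
    rw [show (fun t => Epde ψ t b c d) = (fun _ => (0:ℂ)) from funext fun t => hsol t b c d]
    exact deriv_const a 0
  have eraw := H.deriv.symm.trans hzero
  simp only [comm12 hs0, comm13 hs0, comm14 hs0, comm23 hs0, comm24 hs0, comm34 hs0, comm12 s1, comm13 s1, comm14 s1, comm23 s1, comm24 s1, comm34 s1, comm12 s2, comm13 s2, comm14 s2, comm23 s2, comm24 s2, comm34 s2, comm12 s3, comm13 s3, comm14 s3, comm23 s3, comm24 s3, comm34 s3, comm12 s4, comm13 s4, comm14 s4, comm23 s4, comm24 s4, comm34 s4, Pi.sub_apply, Pi.mul_apply, Pi.pow_apply] at eraw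
  linear_combination eraw

lemma E2lem (ψ : F4) (hψ : Sm ψ) (hsol : ∀ a b c d : ℂ, Epde ψ a b c d = 0)
    (a b c d : ℂ) :
    D2 (D2 (D1 ψ)) a b c d * D4 (D3 ψ) a b c d + D2 (D1 ψ) a b c d * D4 (D3 (D2 ψ)) a b c d - D4 (D2 (D1 ψ)) a b c d * D3 (D2 ψ) a b c d - D4 (D1 ψ) a b c d * D3 (D2 (D2 ψ)) a b c d - Complex.exp (D1 ψ a b c d + D2 ψ a b c d) * ((D2 (D1 ψ) a b c d + D2 (D2 ψ) a b c d) * ((D2 (D1 ψ) a b c d) ^ 2 - D1 (D1 ψ) a b c d * D2 (D2 ψ) a b c d) + 2 * D2 (D1 ψ) a b c d * D2 (D2 (D1 ψ)) a b c d - D2 (D1 (D1 ψ)) a b c d * D2 (D2 ψ) a b c d - D1 (D1 ψ) a b c d * D2 (D2 (D2 ψ)) a b c d) = 0 := by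
  have hs0 := hψ
  have s1 := SmD1 hψ; have s2 := SmD2 hψ; have s3 := SmD3 hψ; have s4 := SmD4 hψ
  have s11 := SmD1 s1; have s21 := SmD2 s1; have s22 := SmD2 s2
  have s43 := SmD4 s3; have s41 := SmD4 s1; have s32 := SmD3 s2
  have H := (((hd2 s21 a b c d).mul (hd2 s43 a b c d)).sub
      ((hd2 s41 a b c d).mul (hd2 s32 a b c d))).sub
    ((((hd2 s1 a b c d).add (hd2 s2 a b c d)).cexp).mul
      (((hd2 s21 a b c d).pow 2).sub ((hd2 s11 a b c d).mul (hd2 s22 a b c d))))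
  have hzero : deriv (fun t => Epde ψ a t c d) b = 0 := by
    rw [show (fun t => Epde ψ a t c d) = (fun _ => (0:ℂ)) from funext fun t => hsol a t c d]
    exact deriv_const b 0
  have eraw := H.deriv.symm.trans hzero
  simp only [comm12 hs0, comm13 hs0, comm14 hs0, comm23 hs0, comm24 hs0, comm34 hs0, comm12 s1, comm13 s1, comm14 s1, comm23 s1, comm24 s1, comm34 s1, comm12 s2, comm13 s2, comm14 s2, comm23 s2, comm24 s2, comm34 s2, comm12 s3, comm13 s3, comm14 s3, comm23 s3, comm24 s3, comm34 s3, comm12 s4, comm13 s4, comm14 s4, comm23 s4, comm24 s4, comm34 s4, Pi.sub_apply, Pi.mul_apply, Pi.pow_apply] at eraw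
  linear_combination eraw

lemma E3lem (ψ : F4) (hψ : Sm ψ) (hsol : ∀ a b c d : ℂ, Epde ψ a b c d = 0)
    (a b c d : ℂ) :
    D3 (D2 (D1 ψ)) a b c d * D4 (D3 ψ) a b c d + D2 (D1 ψ) a b c d * D4 (D3 (D3 ψ)) a b c d - D4 (D3 (D1 ψ)) a b c d * D3 (D2 ψ) a b c d - D4 (D1 ψ) a b c d * D3 (D3 (D2 ψ)) a b c d - Complex.exp (D1 ψ a b c d + D2 ψ a b c d) * ((D3 (D1 ψ) a b c d + D3 (D2 ψ) a b c d) * ((D2 (D1 ψ) a b c d) ^ 2 - D1 (D1 ψ) a b c d * D2 (D2 ψ) a b c d) + 2 * D2 (D1 ψ) a b c d * D3 (D2 (D1 ψ)) a b c d - D3 (D1 (D1 ψ)) a b c d * D2 (D2 ψ) a b c d - D1 (D1 ψ) a b c d * D3 (D2 (D2 ψ)) a b c d) = 0 := by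
  have hs0 := hψ
  have s1 := SmD1 hψ; have s2 := SmD2 hψ; have s3 := SmD3 hψ; have s4 := SmD4 hψ
  have s11 := SmD1 s1; have s21 := SmD2 s1; have s22 := SmD2 s2
  have s43 := SmD4 s3; have s41 := SmD4 s1; have s32 := SmD3 s2
  have H := (((hd3 s21 a b c d).mul (hd3 s43 a b c d)).sub
      ((hd3 s41 a b c d).mul (hd3 s32 a b c d))).sub
    ((((hd3 s1 a b c d).add (hd3 s2 a b c d)).cexp).mul
      (((hd3 s21 a b c d).pow 2).sub ((hd3 s11 a b c d).mul (hd3 s22 a b c d))))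
  have hzero : deriv (fun t => Epde ψ a b t d) c = 0 := by
    rw [show (fun t => Epde ψ a b t d) = (fun _ => (0:ℂ)) from funext fun t => hsol a b t d]
    exact deriv_const c 0
  have eraw := H.deriv.symm.trans hzero
  simp only [comm12 hs0, comm13 hs0, comm14 hs0, comm23 hs0, comm24 hs0, comm34 hs0, comm12 s1, comm13 s1, comm14 s1, comm23 s1, comm24 s1, comm34 s1, comm12 s2, comm13 s2, comm14 s2, comm23 s2, comm24 s2, comm34 s2, comm12 s3, comm13 s3, comm14 s3, comm23 s3, comm24 s3, comm34 s3, comm12 s4, comm13 s4, comm14 s4, comm23 s4, comm24 s4, comm34 s4, Pi.sub_apply, Pi.mul_apply, Pi.pow_apply] at eraw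
  linear_combination eraw

lemma E4lem (ψ : F4) (hψ : Sm ψ) (hsol : ∀ a b c d : ℂ, Epde ψ a b c d = 0)
    (a b c d : ℂ) :
    D4 (D2 (D1 ψ)) a b c d * D4 (D3 ψ) a b c d + D2 (D1 ψ) a b c d * D4 (D4 (D3 ψ)) a b c d - D4 (D4 (D1 ψ)) a b c d * D3 (D2 ψ) a b c d - D4 (D1 ψ) a b c d * D4 (D3 (D2 ψ)) a b c d - Complex.exp (D1 ψ a b c d + D2 ψ a b c d) * ((D4 (D1 ψ) a b c d + D4 (D2 ψ) a b c d) * ((D2 (D1 ψ) a b c d) ^ 2 - D1 (D1 ψ) a b c d * D2 (D2 ψ) a b c d) + 2 * D2 (D1 ψ) a b c d * D4 (D2 (D1 ψ)) a b c d - D4 (D1 (D1 ψ)) a b c d * D2 (D2 ψ) a b c d - D1 (D1 ψ) a b c d * D4 (D2 (D2 ψ)) a b c d) = 0 := by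
  have hs0 := hψ
  have s1 := SmD1 hψ; have s2 := SmD2 hψ; have s3 := SmD3 hψ; have s4 := SmD4 hψ
  have s11 := SmD1 s1; have s21 := SmD2 s1; have s22 := SmD2 s2
  have s43 := SmD4 s3; have s41 := SmD4 s1; have s32 := SmD3 s2
  have H := (((hd4 s21 a b c d).mul (hd4 s43 a b c d)).sub
      ((hd4 s41 a b c d).mul (hd4 s32 a b c d))).sub
    ((((hd4 s1 a b c d).add (hd4 s2 a b c d)).cexp).mul
      (((hd4 s21 a b c d).pow 2).sub ((hd4 s11 a b c d).mul (hd4 s22 a b c d))))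
  have hzero : deriv (fun t => Epde ψ a b c t) d = 0 := by
    rw [show (fun t => Epde ψ a b c t) = (fun _ => (0:ℂ)) from funext fun t => hsol a b c t]
    exact deriv_const d 0
  have eraw := H.deriv.symm.trans hzero
  simp only [comm12 hs0, comm13 hs0, comm14 hs0, comm23 hs0, comm24 hs0, comm34 hs0, comm12 s1, comm13 s1, comm14 s1, comm23 s1, comm24 s1, comm34 s1, comm12 s2, comm13 s2, comm14 s2, comm23 s2, comm24 s2, comm34 s2, comm12 s3, comm13 s3, comm14 s3, comm23 s3, comm24 s3, comm34 s3, comm12 s4, comm13 s4, comm14 s4, comm23 s4, comm24 s4, comm34 s4, Pi.sub_apply, Pi.mul_apply, Pi.pow_apply] at eraw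
  linear_combination eraw



/- STATEMENT 12: the generators X₁ = q∂_q + q̄∂_q̄ + (q+q̄+ψ)∂_ψ, X₂ = (q−q̄)∂_ψ,
X_a = a(z)∂_z − a'(z)q∂_ψ, X_c = c(z)∂_q, X_d = d(z)∂_ψ and their complex
conjugates are point symmetries of E(ψ) = 0: the corresponding characteristics
φ = η − ξⁱψ_i satisfy the linearized equation on the solution manifold. -/
theorem point_symmetries_of_legendre_hcma
    (ψ : F4) (hψ : Sm ψ) (hsol : ∀ a b c d : ℂ, Epde ψ a b c d = 0)
    (A C Dd : ℂ → ℂ) (hA : Differentiable ℂ A) (hC : Differentiable ℂ C)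
    (hD : Differentiable ℂ Dd)
    (AB CB DB : ℂ → ℂ) (hAB : Differentiable ℂ AB) (hCB : Differentiable ℂ CB)
    (hDB : Differentiable ℂ DB) :
    (∀ q qb z w : ℂ, LinE ψ
        (fun q qb z w => q + qb + ψ q qb z w - q * D1 ψ q qb z w - qb * D2 ψ q qb z w)
        q qb z w = 0) ∧
    (∀ q qb z w : ℂ, LinE ψ (fun q qb _ _ => q - qb) q qb z w = 0) ∧
    (∀ q qb z w : ℂ, LinE ψ
        (fun q qb z w => -(deriv A z) * q - A z * D3 ψ q qb z w) q qb z w = 0) ∧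
    (∀ q qb z w : ℂ, LinE ψ
        (fun q qb z w => -(deriv AB w) * qb - AB w * D4 ψ q qb z w) q qb z w = 0) ∧
    (∀ q qb z w : ℂ, LinE ψ
        (fun q qb z w => -(C z) * D1 ψ q qb z w) q qb z w = 0) ∧
    (∀ q qb z w : ℂ, LinE ψ
        (fun q qb z w => -(CB w) * D2 ψ q qb z w) q qb z w = 0) ∧
    (∀ q qb z w : ℂ, LinE ψ (fun _ _ z _ => Dd z) q qb z w = 0) ∧
    (∀ q qb z w : ℂ, LinE ψ (fun _ _ _ w => DB w) q qb z w = 0) := by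
  have hs0 := hψ
  have s1 := SmD1 hψ; have s2 := SmD2 hψ; have s3 := SmD3 hψ; have s4 := SmD4 hψ
  have s11 := SmD1 s1; have s21 := SmD2 s1; have s31 := SmD3 s1; have s41 := SmD4 s1
  have s12 := SmD1 s2; have s22 := SmD2 s2; have s32 := SmD3 s2; have s42 := SmD4 s2
  have s13 := SmD1 s3; have s23 := SmD2 s3; have s33 := SmD3 s3; have s43 := SmD4 s3
  have s14 := SmD1 s4; have s24 := SmD2 s4; have s34 := SmD3 s4; have s44 := SmD4 s4
  refine ⟨?_, ?_, ?_, ?_, ?_, ?_, ?_, ?_⟩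
  · -- X1
    intro a b c d
    have h1 : D1 (fun q qb z w => q + qb + ψ q qb z w - q * D1 ψ q qb z w - qb * D2 ψ q qb z w)
        = fun a b c d => 1 + D1 ψ a b c d - (1 * D1 ψ a b c d + a * D1 (D1 ψ) a b c d)
            - b * D1 (D2 ψ) a b c d := by
      funext a b c d
      exact ((((hasDerivAt_id a).add_const b).add (hd1 hψ a b c d)).sub
        ((hasDerivAt_id a).mul (hd1 s1 a b c d))).sub ((hd1 s2 a b c d).const_mul b) |>.deriv
    have h2 : D2 (fun q qb z w => q + qb + ψ q qb z w - q * D1 ψ q qb z w - qb * D2 ψ q qb z w)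
        = fun a b c d => 1 + D2 ψ a b c d - a * D2 (D1 ψ) a b c d
            - (1 * D2 ψ a b c d + b * D2 (D2 ψ) a b c d) := by
      funext a b c d
      exact ((((hasDerivAt_id b).const_add a).add (hd2 hψ a b c d)).sub
        ((hd2 s1 a b c d).const_mul a)).sub ((hasDerivAt_id b).mul (hd2 s2 a b c d)) |>.deriv
    have h3 : D3 (fun q qb z w => q + qb + ψ q qb z w - q * D1 ψ q qb z w - qb * D2 ψ q qb z w)
        = fun a b c d => D3 ψ a b c d - a * D3 (D1 ψ) a b c d - b * D3 (D2 ψ) a b c d := by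
      funext a b c d
      exact (((hd3 hψ a b c d).const_add (a + b)).sub
        ((hd3 s1 a b c d).const_mul a)).sub ((hd3 s2 a b c d).const_mul b) |>.deriv
    have hp12 : D2 (D1 (fun q qb z w => q + qb + ψ q qb z w - q * D1 ψ q qb z w - qb * D2 ψ q qb z w)) a b c d
        = D2 (D1 ψ) a b c d - (1 * D2 (D1 ψ) a b c d + a * D2 (D1 (D1 ψ)) a b c d)
          - (1 * D1 (D2 ψ) a b c d + b * D2 (D1 (D2 ψ)) a b c d) := by
      rw [h1]
      exact (((hd2 s1 a b c d).const_add 1).sub (((hd2 s1 a b c d).const_mul 1).add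
        ((hd2 s11 a b c d).const_mul a))).sub ((hasDerivAt_id b).mul (hd2 s12 a b c d)) |>.deriv
    have hp11 : D1 (D1 (fun q qb z w => q + qb + ψ q qb z w - q * D1 ψ q qb z w - qb * D2 ψ q qb z w)) a b c d
        = D1 (D1 ψ) a b c d - (1 * D1 (D1 ψ) a b c d
            + (1 * D1 (D1 ψ) a b c d + a * D1 (D1 (D1 ψ)) a b c d))
          - b * D1 (D1 (D2 ψ)) a b c d := by
      rw [h1]
      exact (((hd1 s1 a b c d).const_add 1).sub (((hd1 s1 a b c d).const_mul 1).add
        ((hasDerivAt_id a).mul (hd1 s11 a b c d)))).sub ((hd1 s12 a b c d).const_mul b) |>.deriv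
    have hp14 : D4 (D1 (fun q qb z w => q + qb + ψ q qb z w - q * D1 ψ q qb z w - qb * D2 ψ q qb z w)) a b c d
        = D4 (D1 ψ) a b c d - (1 * D4 (D1 ψ) a b c d + a * D4 (D1 (D1 ψ)) a b c d)
          - b * D4 (D1 (D2 ψ)) a b c d := by
      rw [h1]
      exact (((hd4 s1 a b c d).const_add 1).sub (((hd4 s1 a b c d).const_mul 1).add
        ((hd4 s11 a b c d).const_mul a))).sub ((hd4 s12 a b c d).const_mul b) |>.deriv
    have hp22 : D2 (D2 (fun q qb z w => q + qb + ψ q qb z w - q * D1 ψ q qb z w - qb * D2 ψ q qb z w)) a b c d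
        = D2 (D2 ψ) a b c d - a * D2 (D2 (D1 ψ)) a b c d
          - (1 * D2 (D2 ψ) a b c d + (1 * D2 (D2 ψ) a b c d + b * D2 (D2 (D2 ψ)) a b c d)) := by
      rw [h2]
      exact (((hd2 s2 a b c d).const_add 1).sub ((hd2 s21 a b c d).const_mul a)).sub
        (((hd2 s2 a b c d).const_mul 1).add ((hasDerivAt_id b).mul (hd2 s22 a b c d))) |>.deriv
    have hp23 : D3 (D2 (fun q qb z w => q + qb + ψ q qb z w - q * D1 ψ q qb z w - qb * D2 ψ q qb z w)) a b c d
        = D3 (D2 ψ) a b c d - a * D3 (D2 (D1 ψ)) a b c d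
          - (1 * D3 (D2 ψ) a b c d + b * D3 (D2 (D2 ψ)) a b c d) := by
      rw [h2]
      exact (((hd3 s2 a b c d).const_add 1).sub ((hd3 s21 a b c d).const_mul a)).sub
        (((hd3 s2 a b c d).const_mul 1).add ((hd3 s22 a b c d).const_mul b)) |>.deriv
    have hp34 : D4 (D3 (fun q qb z w => q + qb + ψ q qb z w - q * D1 ψ q qb z w - qb * D2 ψ q qb z w)) a b c d
        = D4 (D3 ψ) a b c d - a * D4 (D3 (D1 ψ)) a b c d - b * D4 (D3 (D2 ψ)) a b c d := by
      rw [h3]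
      exact ((hd4 s3 a b c d).sub ((hd4 s31 a b c d).const_mul a)).sub
        ((hd4 s32 a b c d).const_mul b) |>.deriv
    simp only [LinE]
    rw [hp12, hp34, hp14, hp23, hp11, hp22]
    simp only [h1, h2, comm12 hs0, comm13 hs0, comm14 hs0, comm23 hs0, comm24 hs0, comm34 hs0,
      comm12 s1, comm13 s1, comm14 s1, comm23 s1, comm24 s1, comm34 s1,
      comm12 s2, comm13 s2, comm14 s2, comm23 s2, comm24 s2, comm34 s2,
      comm12 s3, comm13 s3, comm14 s3, comm23 s3, comm24 s3, comm34 s3,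
      comm12 s4, comm13 s4, comm14 s4, comm23 s4, comm24 s4, comm34 s4]
    linear_combination (-a) * E1lem ψ hψ hsol a b c d + (-b) * E2lem ψ hψ hsol a b c d
  · -- X2 : φ = q - qb
    intro a b c d
    have h1 : D1 (fun q qb _ _ : ℂ => q - qb) = fun _ _ _ _ => (1:ℂ) := by
      funext a b c d; exact ((hasDerivAt_id a).sub_const b).deriv
    have h2 : D2 (fun q qb _ _ : ℂ => q - qb) = fun _ _ _ _ => (-1:ℂ) := by
      funext a b c d; exact ((hasDerivAt_id b).const_sub a).deriv
    have h3 : D3 (fun q qb _ _ : ℂ => q - qb) = fun a b _ _ => (0:ℂ) := by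
      funext a b c d; exact deriv_const c (a - b)
    have hp12 : D2 (D1 (fun q qb _ _ : ℂ => q - qb)) a b c d = 0 := by
      rw [h1]; exact deriv_const b 1
    have hp11 : D1 (D1 (fun q qb _ _ : ℂ => q - qb)) a b c d = 0 := by
      rw [h1]; exact deriv_const a 1
    have hp14 : D4 (D1 (fun q qb _ _ : ℂ => q - qb)) a b c d = 0 := by
      rw [h1]; exact deriv_const d 1
    have hp22 : D2 (D2 (fun q qb _ _ : ℂ => q - qb)) a b c d = 0 := by
      rw [h2]; exact deriv_const b (-1)
    have hp23 : D3 (D2 (fun q qb _ _ : ℂ => q - qb)) a b c d = 0 := by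
      rw [h2]; exact deriv_const c (-1)
    have hp34 : D4 (D3 (fun q qb _ _ : ℂ => q - qb)) a b c d = 0 := by
      rw [h3]; exact deriv_const d (0:ℂ)
    simp only [LinE]
    rw [hp12, hp34, hp14, hp23, hp11, hp22]
    simp only [h1, h2]
    ring
  · -- Xa
    intro a b c d
    have hA' : Differentiable ℂ (deriv A) :=
      (contDiff_infty_iff_deriv.mp (hA.contDiff : ContDiff ℂ ((⊤ : ℕ∞) : WithTop ℕ∞) A)).2.differentiable (by simp)
    have h1 : D1 (fun q qb z w => -(deriv A z) * q - A z * D3 ψ q qb z w)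
        = fun a b c d => -deriv A c * 1 - A c * D1 (D3 ψ) a b c d := by
      funext a b c d
      exact (((hasDerivAt_id a).const_mul (-deriv A c)).sub
        ((hd1 s3 a b c d).const_mul (A c))).deriv
    have h2 : D2 (fun q qb z w => -(deriv A z) * q - A z * D3 ψ q qb z w)
        = fun a b c d => 0 - A c * D2 (D3 ψ) a b c d := by
      funext a b c d
      exact ((hasDerivAt_const b (-deriv A c * a)).sub ((hd2 s3 a b c d).const_mul (A c))).deriv
    have h3 : D3 (fun q qb z w => -(deriv A z) * q - A z * D3 ψ q qb z w)
        = fun a b c d => -deriv (deriv A) c * a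
            - (deriv A c * D3 ψ a b c d + A c * D3 (D3 ψ) a b c d) := by
      funext a b c d
      exact ((hA'.differentiableAt.hasDerivAt.neg.mul_const a).sub
        ((hA.differentiableAt.hasDerivAt).mul (hd3 s3 a b c d))).deriv
    have hp12 : D2 (D1 (fun q qb z w => -(deriv A z) * q - A z * D3 ψ q qb z w)) a b c d
        = 0 - A c * D2 (D1 (D3 ψ)) a b c d := by
      rw [h1]
      exact ((hasDerivAt_const b (-deriv A c * 1)).sub ((hd2 s13 a b c d).const_mul (A c))).deriv
    have hp11 : D1 (D1 (fun q qb z w => -(deriv A z) * q - A z * D3 ψ q qb z w)) a b c d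
        = 0 - A c * D1 (D1 (D3 ψ)) a b c d := by
      rw [h1]
      exact ((hasDerivAt_const a (-deriv A c * 1)).sub ((hd1 s13 a b c d).const_mul (A c))).deriv
    have hp14 : D4 (D1 (fun q qb z w => -(deriv A z) * q - A z * D3 ψ q qb z w)) a b c d
        = 0 - A c * D4 (D1 (D3 ψ)) a b c d := by
      rw [h1]
      exact ((hasDerivAt_const d (-deriv A c * 1)).sub ((hd4 s13 a b c d).const_mul (A c))).deriv
    have hp22 : D2 (D2 (fun q qb z w => -(deriv A z) * q - A z * D3 ψ q qb z w)) a b c d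
        = 0 - A c * D2 (D2 (D3 ψ)) a b c d := by
      rw [h2]
      exact ((hasDerivAt_const b (0:ℂ)).sub ((hd2 s23 a b c d).const_mul (A c))).deriv
    have hp23 : D3 (D2 (fun q qb z w => -(deriv A z) * q - A z * D3 ψ q qb z w)) a b c d
        = 0 - (deriv A c * D2 (D3 ψ) a b c d + A c * D3 (D2 (D3 ψ)) a b c d) := by
      rw [h2]
      exact ((hasDerivAt_const c (0:ℂ)).sub
        ((hA.differentiableAt.hasDerivAt).mul (hd3 s23 a b c d))).deriv
    have hp34 : D4 (D3 (fun q qb z w => -(deriv A z) * q - A z * D3 ψ q qb z w)) a b c d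
        = 0 - (deriv A c * D4 (D3 ψ) a b c d + A c * D4 (D3 (D3 ψ)) a b c d) := by
      rw [h3]
      exact ((hasDerivAt_const d (-deriv (deriv A) c * a)).sub
        (((hd4 s3 a b c d).const_mul (deriv A c)).add
          ((hd4 s33 a b c d).const_mul (A c)))).deriv
    have hE := hsol a b c d
    simp only [Epde] at hE
    simp only [LinE]
    rw [hp12, hp34, hp14, hp23, hp11, hp22]
    simp only [h1, h2, comm12 hs0, comm13 hs0, comm14 hs0, comm23 hs0, comm24 hs0, comm34 hs0,
      comm12 s1, comm13 s1, comm14 s1, comm23 s1, comm24 s1, comm34 s1,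
      comm12 s2, comm13 s2, comm14 s2, comm23 s2, comm24 s2, comm34 s2,
      comm12 s3, comm13 s3, comm14 s3, comm23 s3, comm24 s3, comm34 s3,
      comm12 s4, comm13 s4, comm14 s4, comm23 s4, comm24 s4, comm34 s4]
    linear_combination (-(A c)) * E3lem ψ hψ hsol a b c d + (-(deriv A c)) * hE
  · -- XaBar
    intro a b c d
    have hAB' : Differentiable ℂ (deriv AB) :=
      (contDiff_infty_iff_deriv.mp (hAB.contDiff : ContDiff ℂ ((⊤ : ℕ∞) : WithTop ℕ∞) AB)).2.differentiable (by simp)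
    have h1 : D1 (fun q qb z w => -(deriv AB w) * qb - AB w * D4 ψ q qb z w)
        = fun a b c d => 0 - AB d * D1 (D4 ψ) a b c d := by
      funext a b c d
      exact ((hasDerivAt_const a (-deriv AB d * b)).sub ((hd1 s4 a b c d).const_mul (AB d))).deriv
    have h2 : D2 (fun q qb z w => -(deriv AB w) * qb - AB w * D4 ψ q qb z w)
        = fun a b c d => -deriv AB d * 1 - AB d * D2 (D4 ψ) a b c d := by
      funext a b c d
      exact (((hasDerivAt_id b).const_mul (-deriv AB d)).sub
        ((hd2 s4 a b c d).const_mul (AB d))).deriv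
    have h3 : D3 (fun q qb z w => -(deriv AB w) * qb - AB w * D4 ψ q qb z w)
        = fun a b c d => 0 - AB d * D3 (D4 ψ) a b c d := by
      funext a b c d
      exact ((hasDerivAt_const c (-deriv AB d * b)).sub ((hd3 s4 a b c d).const_mul (AB d))).deriv
    have hp12 : D2 (D1 (fun q qb z w => -(deriv AB w) * qb - AB w * D4 ψ q qb z w)) a b c d
        = 0 - AB d * D2 (D1 (D4 ψ)) a b c d := by
      rw [h1]
      exact ((hasDerivAt_const b (0:ℂ)).sub ((hd2 s14 a b c d).const_mul (AB d))).deriv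
    have hp11 : D1 (D1 (fun q qb z w => -(deriv AB w) * qb - AB w * D4 ψ q qb z w)) a b c d
        = 0 - AB d * D1 (D1 (D4 ψ)) a b c d := by
      rw [h1]
      exact ((hasDerivAt_const a (0:ℂ)).sub ((hd1 s14 a b c d).const_mul (AB d))).deriv
    have hp14 : D4 (D1 (fun q qb z w => -(deriv AB w) * qb - AB w * D4 ψ q qb z w)) a b c d
        = 0 - (deriv AB d * D1 (D4 ψ) a b c d + AB d * D4 (D1 (D4 ψ)) a b c d) := by
      rw [h1]
      exact ((hasDerivAt_const d (0:ℂ)).sub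
        ((hAB.differentiableAt.hasDerivAt).mul (hd4 s14 a b c d))).deriv
    have hp22 : D2 (D2 (fun q qb z w => -(deriv AB w) * qb - AB w * D4 ψ q qb z w)) a b c d
        = 0 - AB d * D2 (D2 (D4 ψ)) a b c d := by
      rw [h2]
      exact ((hasDerivAt_const b (-deriv AB d * 1)).sub ((hd2 s24 a b c d).const_mul (AB d))).deriv
    have hp23 : D3 (D2 (fun q qb z w => -(deriv AB w) * qb - AB w * D4 ψ q qb z w)) a b c d
        = 0 - AB d * D3 (D2 (D4 ψ)) a b c d := by
      rw [h2]
      exact ((hasDerivAt_const c (-deriv AB d * 1)).sub ((hd3 s24 a b c d).const_mul (AB d))).deriv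
    have hp34 : D4 (D3 (fun q qb z w => -(deriv AB w) * qb - AB w * D4 ψ q qb z w)) a b c d
        = 0 - (deriv AB d * D3 (D4 ψ) a b c d + AB d * D4 (D3 (D4 ψ)) a b c d) := by
      rw [h3]
      exact ((hasDerivAt_const d (0:ℂ)).sub
        ((hAB.differentiableAt.hasDerivAt).mul (hd4 s34 a b c d))).deriv
    have hE := hsol a b c d
    simp only [Epde] at hE
    simp only [LinE]
    rw [hp12, hp34, hp14, hp23, hp11, hp22]
    simp only [h1, h2, comm12 hs0, comm13 hs0, comm14 hs0, comm23 hs0, comm24 hs0, comm34 hs0,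
      comm12 s1, comm13 s1, comm14 s1, comm23 s1, comm24 s1, comm34 s1,
      comm12 s2, comm13 s2, comm14 s2, comm23 s2, comm24 s2, comm34 s2,
      comm12 s3, comm13 s3, comm14 s3, comm23 s3, comm24 s3, comm34 s3,
      comm12 s4, comm13 s4, comm14 s4, comm23 s4, comm24 s4, comm34 s4]
    linear_combination (-(AB d)) * E4lem ψ hψ hsol a b c d + (-(deriv AB d)) * hE
  · -- Xc : φ = -C z * D1 ψ
    intro a b c d
    have h1 : D1 (fun q qb z w => -(C z) * D1 ψ q qb z w)
        = fun a b c d => -C c * D1 (D1 ψ) a b c d := by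
      funext a b c d; exact ((hd1 s1 a b c d).const_mul (-C c)).deriv
    have h2 : D2 (fun q qb z w => -(C z) * D1 ψ q qb z w)
        = fun a b c d => -C c * D2 (D1 ψ) a b c d := by
      funext a b c d; exact ((hd2 s1 a b c d).const_mul (-C c)).deriv
    have h3 : D3 (fun q qb z w => -(C z) * D1 ψ q qb z w)
        = fun a b c d => -deriv C c * D1 ψ a b c d + -C c * D3 (D1 ψ) a b c d := by
      funext a b c d
      exact ((hC.differentiableAt.hasDerivAt.neg).mul (hd3 s1 a b c d)).deriv
    have hp12 : D2 (D1 (fun q qb z w => -(C z) * D1 ψ q qb z w)) a b c d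
        = -C c * D2 (D1 (D1 ψ)) a b c d := by
      rw [h1]; exact ((hd2 s11 a b c d).const_mul (-C c)).deriv
    have hp11 : D1 (D1 (fun q qb z w => -(C z) * D1 ψ q qb z w)) a b c d
        = -C c * D1 (D1 (D1 ψ)) a b c d := by
      rw [h1]; exact ((hd1 s11 a b c d).const_mul (-C c)).deriv
    have hp14 : D4 (D1 (fun q qb z w => -(C z) * D1 ψ q qb z w)) a b c d
        = -C c * D4 (D1 (D1 ψ)) a b c d := by
      rw [h1]; exact ((hd4 s11 a b c d).const_mul (-C c)).deriv
    have hp22 : D2 (D2 (fun q qb z w => -(C z) * D1 ψ q qb z w)) a b c d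
        = -C c * D2 (D2 (D1 ψ)) a b c d := by
      rw [h2]; exact ((hd2 s21 a b c d).const_mul (-C c)).deriv
    have hp23 : D3 (D2 (fun q qb z w => -(C z) * D1 ψ q qb z w)) a b c d
        = -deriv C c * D2 (D1 ψ) a b c d + -C c * D3 (D2 (D1 ψ)) a b c d := by
      rw [h2]; exact ((hC.differentiableAt.hasDerivAt.neg).mul (hd3 s21 a b c d)).deriv
    have hp34 : D4 (D3 (fun q qb z w => -(C z) * D1 ψ q qb z w)) a b c d
        = -deriv C c * D4 (D1 ψ) a b c d + -C c * D4 (D3 (D1 ψ)) a b c d := by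
      rw [h3]
      exact (((hd4 s1 a b c d).const_mul (-deriv C c)).add
        ((hd4 s31 a b c d).const_mul (-C c))).deriv
    simp only [LinE]
    rw [hp12, hp34, hp14, hp23, hp11, hp22]
    simp only [h1, h2, comm12 hs0, comm13 hs0, comm14 hs0, comm23 hs0, comm24 hs0, comm34 hs0,
      comm12 s1, comm13 s1, comm14 s1, comm23 s1, comm24 s1, comm34 s1,
      comm12 s2, comm13 s2, comm14 s2, comm23 s2, comm24 s2, comm34 s2,
      comm12 s3, comm13 s3, comm14 s3, comm23 s3, comm24 s3, comm34 s3,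
      comm12 s4, comm13 s4, comm14 s4, comm23 s4, comm24 s4, comm34 s4]
    linear_combination (-C c) * E1lem ψ hψ hsol a b c d
  · -- XcBar
    intro a b c d
    have h1 : D1 (fun q qb z w => -(CB w) * D2 ψ q qb z w)
        = fun a b c d => -CB d * D1 (D2 ψ) a b c d := by
      funext a b c d; exact ((hd1 s2 a b c d).const_mul (-CB d)).deriv
    have h2 : D2 (fun q qb z w => -(CB w) * D2 ψ q qb z w)
        = fun a b c d => -CB d * D2 (D2 ψ) a b c d := by
      funext a b c d; exact ((hd2 s2 a b c d).const_mul (-CB d)).deriv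
    have h3 : D3 (fun q qb z w => -(CB w) * D2 ψ q qb z w)
        = fun a b c d => -CB d * D3 (D2 ψ) a b c d := by
      funext a b c d; exact ((hd3 s2 a b c d).const_mul (-CB d)).deriv
    have hp12 : D2 (D1 (fun q qb z w => -(CB w) * D2 ψ q qb z w)) a b c d
        = -CB d * D2 (D1 (D2 ψ)) a b c d := by
      rw [h1]; exact ((hd2 s12 a b c d).const_mul (-CB d)).deriv
    have hp11 : D1 (D1 (fun q qb z w => -(CB w) * D2 ψ q qb z w)) a b c d
        = -CB d * D1 (D1 (D2 ψ)) a b c d := by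
      rw [h1]; exact ((hd1 s12 a b c d).const_mul (-CB d)).deriv
    have hp14 : D4 (D1 (fun q qb z w => -(CB w) * D2 ψ q qb z w)) a b c d
        = -deriv CB d * D1 (D2 ψ) a b c d + -CB d * D4 (D1 (D2 ψ)) a b c d := by
      rw [h1]
      exact ((hCB.differentiableAt.hasDerivAt.neg).mul (hd4 s12 a b c d)).deriv
    have hp22 : D2 (D2 (fun q qb z w => -(CB w) * D2 ψ q qb z w)) a b c d
        = -CB d * D2 (D2 (D2 ψ)) a b c d := by
      rw [h2]; exact ((hd2 s22 a b c d).const_mul (-CB d)).deriv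
    have hp23 : D3 (D2 (fun q qb z w => -(CB w) * D2 ψ q qb z w)) a b c d
        = -CB d * D3 (D2 (D2 ψ)) a b c d := by
      rw [h2]; exact ((hd3 s22 a b c d).const_mul (-CB d)).deriv
    have hp34 : D4 (D3 (fun q qb z w => -(CB w) * D2 ψ q qb z w)) a b c d
        = -deriv CB d * D3 (D2 ψ) a b c d + -CB d * D4 (D3 (D2 ψ)) a b c d := by
      rw [h3]
      exact ((hCB.differentiableAt.hasDerivAt.neg).mul (hd4 s32 a b c d)).deriv
    simp only [LinE]
    rw [hp12, hp34, hp14, hp23, hp11, hp22]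
    simp only [h1, h2, comm12 hs0, comm13 hs0, comm14 hs0, comm23 hs0, comm24 hs0, comm34 hs0,
      comm12 s1, comm13 s1, comm14 s1, comm23 s1, comm24 s1, comm34 s1,
      comm12 s2, comm13 s2, comm14 s2, comm23 s2, comm24 s2, comm34 s2,
      comm12 s3, comm13 s3, comm14 s3, comm23 s3, comm24 s3, comm34 s3,
      comm12 s4, comm13 s4, comm14 s4, comm23 s4, comm24 s4, comm34 s4]
    linear_combination (-(CB d)) * E2lem ψ hψ hsol a b c d
  · -- Xd : φ = Dd z
    intro a b c d
    have h1 : D1 (fun _ _ z _ : ℂ => Dd z) = fun _ _ _ _ => (0:ℂ) := by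
      funext a b c d; exact deriv_const a (Dd c)
    have h2 : D2 (fun _ _ z _ : ℂ => Dd z) = fun _ _ _ _ => (0:ℂ) := by
      funext a b c d; exact deriv_const b (Dd c)
    have h3 : D3 (fun _ _ z _ : ℂ => Dd z) = fun _ _ c _ => deriv Dd c := rfl
    have hp12 : D2 (D1 (fun _ _ z _ : ℂ => Dd z)) a b c d = 0 := by
      rw [h1]; exact deriv_const b (0:ℂ)
    have hp11 : D1 (D1 (fun _ _ z _ : ℂ => Dd z)) a b c d = 0 := by
      rw [h1]; exact deriv_const a (0:ℂ)
    have hp14 : D4 (D1 (fun _ _ z _ : ℂ => Dd z)) a b c d = 0 := by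
      rw [h1]; exact deriv_const d (0:ℂ)
    have hp22 : D2 (D2 (fun _ _ z _ : ℂ => Dd z)) a b c d = 0 := by
      rw [h2]; exact deriv_const b (0:ℂ)
    have hp23 : D3 (D2 (fun _ _ z _ : ℂ => Dd z)) a b c d = 0 := by
      rw [h2]; exact deriv_const c (0:ℂ)
    have hp34 : D4 (D3 (fun _ _ z _ : ℂ => Dd z)) a b c d = 0 := by
      rw [h3]; exact deriv_const d (deriv Dd c)
    simp only [LinE]
    rw [hp12, hp34, hp14, hp23, hp11, hp22]
    simp only [h1, h2]
    ring
  · -- XdBar : φ = DB w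
    intro a b c d
    have h1 : D1 (fun _ _ _ w : ℂ => DB w) = fun _ _ _ _ => (0:ℂ) := by
      funext a b c d; exact deriv_const a (DB d)
    have h2 : D2 (fun _ _ _ w : ℂ => DB w) = fun _ _ _ _ => (0:ℂ) := by
      funext a b c d; exact deriv_const b (DB d)
    have h3 : D3 (fun _ _ _ w : ℂ => DB w) = fun _ _ _ _ => (0:ℂ) := by
      funext a b c d; exact deriv_const c (DB d)
    have hp12 : D2 (D1 (fun _ _ _ w : ℂ => DB w)) a b c d = 0 := by
      rw [h1]; exact deriv_const b (0:ℂ)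
    have hp11 : D1 (D1 (fun _ _ _ w : ℂ => DB w)) a b c d = 0 := by
      rw [h1]; exact deriv_const a (0:ℂ)
    have hp14 : D4 (D1 (fun _ _ _ w : ℂ => DB w)) a b c d = 0 := by
      rw [h1]; exact deriv_const d (0:ℂ)
    have hp22 : D2 (D2 (fun _ _ _ w : ℂ => DB w)) a b c d = 0 := by
      rw [h2]; exact deriv_const b (0:ℂ)
    have hp23 : D3 (D2 (fun _ _ _ w : ℂ => DB w)) a b c d = 0 := by
      rw [h2]; exact deriv_const c (0:ℂ)
    have hp34 : D4 (D3 (fun _ _ _ w : ℂ => DB w)) a b c d = 0 := by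
      rw [h3]; exact deriv_const d (0:ℂ)
    simp only [LinE]
    rw [hp12, hp34, hp14, hp23, hp11, hp22]
    simp only [h1, h2]
    ring
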